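/- Let N ≥ 1 be an integer, 1 < p < q, and let v be a radial Neumann solution with exponent q. Then L_q(r) := ((p−1)/p)·v'(r)^p − v(r)^p/p + v(r)^q/q ≤ 0 for every r ∈ [0,1]; equivalently, the point (v(r), v'(r)) lies in the region { (x,y) : x ≥ 0, 0 ≤ y ≤ [ (p/(p−1))·(x^p/p − x^q/q) ]^{1/p} }. -/

import Mathlib

open Real Set Filter intervalIntegral

/-- `v : [0,1] → ℝ` is a radial Neumann solution with exponent `q` of
`-Δ_p v + v^{p-1} = v^{q-1}` in the unit ball of `ℝ^N`, in the cone of positive,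
radially nondecreasing functions; `v'` is its derivative on `[0,1]`. -/
def IsRadialNeumannSol (N : ℕ) (p q : ℝ) (v v' : ℝ → ℝ) : Prop :=
  (∀ r ∈ Set.Icc (0:ℝ) 1, HasDerivWithinAt v (v' r) (Set.Icc (0:ℝ) 1) r) ∧
  ContinuousOn v' (Set.Icc (0:ℝ) 1) ∧
  (∀ r ∈ Set.Icc (0:ℝ) 1, 0 < v r) ∧
  MonotoneOn v (Set.Icc (0:ℝ) 1) ∧
  (∀ r ∈ Set.Icc (0:ℝ) 1, 0 ≤ v' r) ∧
  v' 0 = 0 ∧ v' 1 = 0 ∧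
  (∀ r ∈ Set.Ioo (0:ℝ) 1,
    HasDerivAt (fun s => s ^ (N - 1) * v' s ^ (p - 1))
      (r ^ (N - 1) * (v r ^ (p - 1) - v r ^ (q - 1))) r)

/-- For a radial Neumann solution `v`, the quantity
`L_q(r) = ((p-1)/p) v'(r)^p - v(r)^p/p + v(r)^q/q` is nonpositive on `[0,1]`;
equivalently, `(v(r), v'(r))` lies in the region
`{(x,y) : x ≥ 0, 0 ≤ y ≤ [(p/(p-1))(x^p/p - x^q/q)]^{1/p}}`. -/
theorem Lq_nonpos
    (N : ℕ) (hN : 1 ≤ N) (p q : ℝ) (hp : 1 < p) (hpq : p < q)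
    (v v' : ℝ → ℝ) (hsol : IsRadialNeumannSol N p q v v') :
    ∀ r ∈ Set.Icc (0:ℝ) 1,
      (p - 1) / p * v' r ^ p - v r ^ p / p + v r ^ q / q ≤ 0 ∧
      (0 ≤ v r ∧ 0 ≤ v' r ∧
        v' r ≤ (p / (p - 1) * (v r ^ p / p - v r ^ q / q)) ^ (1 / p)) := by
  obtain ⟨hv, hv'c, hvpos, hvmono, hv'nn, h0, h1, heq⟩ := hsol
  have hp0 : (0:ℝ) < p := by linarith
  have hp1 : (0:ℝ) < p - 1 := by linarith
  have hq0 : (0:ℝ) < q := by linarith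
  have h0mem : (0:ℝ) ∈ Set.Icc (0:ℝ) 1 := ⟨le_refl 0, zero_le_one⟩
  have h1mem : (1:ℝ) ∈ Set.Icc (0:ℝ) 1 := ⟨zero_le_one, le_refl 1⟩
  -- Step 1: v 0 ≤ 1
  have hv0le : v 0 ≤ 1 := by
    by_contra hcon
    push_neg at hcon
    have hWc : ContinuousOn (fun s : ℝ => s ^ (N-1) * v' s ^ (p-1)) (Set.Icc 0 1) := by
      exact (continuousOn_pow _).mul
        (hv'c.rpow_const (fun x _ => Or.inr hp1.le))
    have hanti : StrictAntiOn (fun s : ℝ => s ^ (N-1) * v' s ^ (p-1)) (Set.Icc 0 1) := by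
      apply strictAntiOn_of_deriv_neg (convex_Icc 0 1) hWc
      intro x hx
      rw [interior_Icc] at hx
      rw [(heq x hx).deriv]
      have hvx : 1 < v x :=
        lt_of_lt_of_le hcon (hvmono h0mem ⟨hx.1.le, hx.2.le⟩ hx.1.le)
      have h2 : v x ^ (p-1) < v x ^ (q-1) :=
        Real.rpow_lt_rpow_of_exponent_lt hvx (by linarith)
      have hpow : 0 < x ^ (N-1) := pow_pos hx.1 _
      nlinarith
    have hlt := hanti h0mem h1mem zero_lt_one
    have hz : (0:ℝ) ^ (p-1) = 0 := Real.zero_rpow (ne_of_gt hp1)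
    simp only [h0, h1, hz, mul_zero] at hlt
    exact lt_irrefl 0 hlt
  -- The energy
  set E := fun s : ℝ => (p-1)/p * v' s ^ p - v s ^ p / p + v s ^ q / q with hEdef
  have hEderiv : ∀ r ∈ Set.Ioo (0:ℝ) 1, ∃ d ≤ 0, HasDerivAt E d r := by
    intro r hr
    have hrI : r ∈ Set.Icc (0:ℝ) 1 := ⟨hr.1.le, hr.2.le⟩
    have hnhds : Set.Icc (0:ℝ) 1 ∈ nhds r := Icc_mem_nhds hr.1 hr.2
    have hvr : HasDerivAt v (v' r) r := (hv r hrI).hasDerivAt hnhds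
    have hA : HasDerivAt (fun s : ℝ => s ^ (N-1)) (((N-1:ℕ):ℝ) * r ^ (N-1-1)) r :=
      hasDerivAt_pow (N-1) r
    have hAr : (r:ℝ) ^ (N-1) ≠ 0 := ne_of_gt (pow_pos hr.1 _)
    have hWd := heq r hr
    -- derivative of u = v'^(p-1)
    set du : ℝ := ((r ^ (N-1) * (v r ^ (p-1) - v r ^ (q-1))) * r ^ (N-1)
        - (r ^ (N-1) * v' r ^ (p-1)) * (((N-1:ℕ):ℝ) * r ^ (N-1-1))) / (r ^ (N-1))^2
      with hdudef
    have hu : HasDerivAt (fun s => v' s ^ (p-1)) du r := by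
      have hdiv := hWd.div hA hAr
      apply hdiv.congr_of_eventuallyEq
      filter_upwards [Ioi_mem_nhds hr.1] with s hs
      have hs0 : (s:ℝ) ^ (N-1) ≠ 0 := ne_of_gt (pow_pos hs _)
      simp only [Pi.div_apply]; rw [mul_div_cancel_left₀ _ hs0]
    have hc1 : 1 ≤ p/(p-1) := by
      rw [le_div_iff₀ hp1]; linarith
    have hcomp : HasDerivAt (fun s => (v' s ^ (p-1)) ^ (p/(p-1)))
        (du * (p/(p-1)) * (v' r ^ (p-1)) ^ (p/(p-1) - 1)) r :=
      hu.rpow_const (Or.inr hc1)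
    have hv'p : HasDerivAt (fun s => v' s ^ p)
        (du * (p/(p-1)) * (v' r ^ (p-1)) ^ (p/(p-1) - 1)) r := by
      apply hcomp.congr_of_eventuallyEq
      filter_upwards [hnhds] with s hs
      rw [← Real.rpow_mul (hv'nn s hs)]
      congr 1
      field_simp
    have hvp : HasDerivAt (fun s => v s ^ p) (v' r * p * v r ^ (p-1)) r :=
      hvr.rpow_const (Or.inl (ne_of_gt (hvpos r hrI)))
    have hvq : HasDerivAt (fun s => v s ^ q) (v' r * q * v r ^ (q-1)) r :=
      hvr.rpow_const (Or.inl (ne_of_gt (hvpos r hrI)))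
    refine ⟨(p-1)/p * (du * (p/(p-1)) * (v' r ^ (p-1)) ^ (p/(p-1) - 1))
      - (v' r * p * v r ^ (p-1)) / p + (v' r * q * v r ^ (q-1)) / q, ?_, ?_⟩
    · -- nonpositivity
      have hX : (v' r ^ (p-1)) ^ (p/(p-1) - 1) = v' r := by
        have he : p/(p-1) - 1 = 1/(p-1) := by field_simp; ring
        rw [he, ← Real.rpow_mul (hv'nn r hrI), mul_one_div,
          div_self (ne_of_gt hp1), Real.rpow_one]
      rw [hX]
      have hdu_le : du ≤ v r ^ (p-1) - v r ^ (q-1) := by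
        rw [hdudef, div_le_iff₀ (by positivity)]
        have hnn : 0 ≤ r ^ (N-1) * v' r ^ (p-1) * (((N-1:ℕ):ℝ) * r ^ (N-1-1)) :=
          mul_nonneg (mul_nonneg (pow_nonneg hr.1.le _)
            (Real.rpow_nonneg (hv'nn r hrI) _))
            (mul_nonneg (Nat.cast_nonneg _) (pow_nonneg hr.1.le _))
        nlinarith
      have hv'r : 0 ≤ v' r := hv'nn r hrI
      have hpne : p ≠ 0 := ne_of_gt hp0
      have hqne : q ≠ 0 := ne_of_gt hq0
      have hp1ne : p - 1 ≠ 0 := ne_of_gt hp1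
      have key : (p-1)/p * (du * (p/(p-1)) * v' r) - v' r * p * v r ^ (p-1) / p
          + v' r * q * v r ^ (q-1) / q
          = v' r * (du - (v r ^ (p-1) - v r ^ (q-1))) := by
        field_simp
        ring
      rw [key]
      exact mul_nonpos_iff.mpr (Or.inl ⟨hv'r, by linarith⟩)
    · exact ((hv'p.const_mul _).sub (hvp.div_const p)).add (hvq.div_const q)
  have hvc : ContinuousOn v (Set.Icc 0 1) := fun x hx => (hv x hx).continuousWithinAt
  have hEcont : ContinuousOn E (Set.Icc 0 1) := by
    apply ContinuousOn.add
    apply ContinuousOn.sub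
    · exact continuousOn_const.mul (hv'c.rpow_const (fun x _ => Or.inr hp0.le))
    · exact (hvc.rpow_const (fun x hx => Or.inl (ne_of_gt (hvpos x hx)))).div_const p
    · exact (hvc.rpow_const (fun x hx => Or.inl (ne_of_gt (hvpos x hx)))).div_const q
  have hEanti : AntitoneOn E (Set.Icc 0 1) := by
    apply antitoneOn_of_deriv_nonpos (convex_Icc 0 1) hEcont
    · intro x hx
      rw [interior_Icc] at hx
      obtain ⟨d, _, hEd⟩ := hEderiv x hx
      exact hEd.differentiableAt.differentiableWithinAt
    · intro x hx
      rw [interior_Icc] at hx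
      obtain ⟨d, hd, hEd⟩ := hEderiv x hx
      rw [hEd.deriv]; exact hd
  have hE0 : E 0 ≤ 0 := by
    have hv0 : 0 < v 0 := hvpos 0 h0mem
    have hq_le : v 0 ^ q ≤ v 0 ^ p :=
      Real.rpow_le_rpow_of_exponent_ge hv0 hv0le hpq.le
    have hz : (0:ℝ) ^ p = 0 := Real.zero_rpow (ne_of_gt hp0)
    have hdiv : v 0 ^ q / q ≤ v 0 ^ p / p := by
      rw [div_le_div_iff₀ hq0 hp0]
      nlinarith [Real.rpow_nonneg hv0.le p]
    simp only [hEdef, h0, hz, mul_zero]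
    linarith
  intro r hr
  have hEr : E r ≤ 0 := le_trans (hEanti h0mem hr hr.1) hE0
  have hErval : (p-1)/p * v' r ^ p - v r ^ p / p + v r ^ q / q ≤ 0 := hEr
  refine ⟨hErval, (hvpos r hr).le, hv'nn r hr, ?_⟩
  have hv'r : 0 ≤ v' r := hv'nn r hr
  have h3 : (p-1)/p * v' r ^ p ≤ v r ^ p / p - v r ^ q / q := by linarith
  have h4 : v' r ^ p ≤ p/(p-1) * (v r ^ p / p - v r ^ q / q) := by
    calc v' r ^ p = p/(p-1) * ((p-1)/p * v' r ^ p) := by field_simp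
      _ ≤ p/(p-1) * (v r ^ p / p - v r ^ q / q) :=
        mul_le_mul_of_nonneg_left h3 (by positivity)
  calc v' r = (v' r ^ p) ^ (1/p) := by
        rw [one_div, Real.rpow_rpow_inv hv'r (ne_of_gt hp0)]
    _ ≤ (p/(p-1) * (v r ^ p / p - v r ^ q / q)) ^ (1/p) :=
        Real.rpow_le_rpow (Real.rpow_nonneg hv'r p) h4 (by positivity)
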